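/- Let S be a finite nonempty set, and for each i ∈ S let h_i : ℕ → ℚ be a function such that there exist N_i > 0 and, for each residue class mod N_i, rationals α, γ with h_i(m) = αm + γ for all sufficiently large m in that class. Then the function m ↦ max_{i∈S} h_i(m) has the same property: there exists N > 0 and, for each residue class mod N, rationals α, γ such that max_i h_i(m) = αm + γ for all sufficiently large m in that class. -/

import Mathlib

/-- A function g : ℕ → ℚ is eventually affine linear on congruence classes. -/
def EventuallyAffineOnClasses (g : ℕ → ℚ) : Prop :=
  ∃ N : ℕ, 0 < N ∧ ∀ j < N, ∃ α γ : ℚ, ∃ M : ℕ,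
    ∀ m : ℕ, M ≤ m → m % N = j → g m = α * m + γ

lemma maxAffine (α1 γ1 α2 γ2 : ℚ) :
    ∃ α γ : ℚ, ∃ M : ℕ, ∀ m : ℕ, M ≤ m →
      max (α1 * m + γ1) (α2 * m + γ2) = α * m + γ := by
  rcases lt_trichotomy α1 α2 with hlt | heq | hgt
  · refine ⟨α2, γ2, ⌈(γ1 - γ2) / (α2 - α1)⌉₊, fun m hm => ?_⟩
    have hpos : 0 < α2 - α1 := sub_pos.2 hlt
    have h1 : (γ1 - γ2) / (α2 - α1) ≤ (m : ℚ) :=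
      le_trans (Nat.le_ceil _) (by exact_mod_cast hm)
    have h2 := (div_le_iff₀ hpos).mp h1
    exact max_eq_right (by nlinarith)
  · subst heq
    exact ⟨α1, max γ1 γ2, 0, fun m _ => max_add_add_left _ _ _⟩
  · refine ⟨α1, γ1, ⌈(γ2 - γ1) / (α1 - α2)⌉₊, fun m hm => ?_⟩
    have hpos : 0 < α1 - α2 := sub_pos.2 hgt
    have h1 : (γ2 - γ1) / (α1 - α2) ≤ (m : ℚ) :=
      le_trans (Nat.le_ceil _) (by exact_mod_cast hm)
    have h2 := (div_le_iff₀ hpos).mp h1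
    exact max_eq_left (by nlinarith)

lemma maxEAC {f g : ℕ → ℚ} (hf : EventuallyAffineOnClasses f)
    (hg : EventuallyAffineOnClasses g) :
    EventuallyAffineOnClasses (fun m => max (f m) (g m)) := by
  obtain ⟨Nf, hNf, Hf⟩ := hf
  obtain ⟨Ng, hNg, Hg⟩ := hg
  refine ⟨Nf * Ng, Nat.mul_pos hNf hNg, fun j _ => ?_⟩
  obtain ⟨α1, γ1, M1, H1⟩ := Hf (j % Nf) (Nat.mod_lt _ hNf)
  obtain ⟨α2, γ2, M2, H2⟩ := Hg (j % Ng) (Nat.mod_lt _ hNg)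
  obtain ⟨α, γ, M, HM⟩ := maxAffine α1 γ1 α2 γ2
  refine ⟨α, γ, max M (max M1 M2), fun m hm hmod => ?_⟩
  have hm1 : m % Nf = j % Nf := by
    rw [← Nat.mod_mod_of_dvd m ⟨Ng, rfl⟩, hmod]
  have hm2 : m % Ng = j % Ng := by
    rw [← Nat.mod_mod_of_dvd m ⟨Nf, mul_comm _ _⟩, hmod]
  simp only
  rw [H1 m (le_trans (le_trans (le_max_left _ _) (le_max_right _ _)) hm) hm1,
      H2 m (le_trans (le_trans (le_max_right _ _) (le_max_right _ _)) hm) hm2]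
  exact HM m (le_trans (le_max_left _ _) hm)

/-- The maximum of finitely many functions that are eventually affine linear on
congruence classes is again eventually affine linear on congruence classes. -/
theorem stmt3 {ι : Type*} (S : Finset ι) (hS : S.Nonempty) (h : ι → ℕ → ℚ)
    (hh : ∀ i ∈ S, EventuallyAffineOnClasses (h i)) :
    EventuallyAffineOnClasses (fun m => S.sup' hS (fun i => h i m)) := by
  induction S using Finset.cons_induction with
  | empty => exact absurd hS (by simp)
  | cons a s ha ih =>
    rcases s.eq_empty_or_nonempty with rfl | hs
    · simpa using hh a (by simp)
    · have h2 := ih hs (fun i hi => hh i (Finset.mem_cons_of_mem hi))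
      have h1 := hh a (Finset.mem_cons_self _ _)
      have heq : (fun m => (Finset.cons a s ha).sup' hS fun i => h i m)
          = fun m => max (h a m) (s.sup' hs fun i => h i m) := by
        funext m; rw [Finset.sup'_cons hs]
      rw [heq]
      exact maxEAC h1 h2
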